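/- Let N ≥ 1 and let u, v ∈ C²(ℝ^N) be a bounded solution of −Δu = u v² − λ u³, −Δv = v u² − λ v³ with u, v ≥ 0 and λ > 1. Then u = v = 0. -/

import Mathlib

open Real

noncomputable def lap {N : ℕ} (u : EuclideanSpace ℝ (Fin N) → ℝ)
    (x : EuclideanSpace ℝ (Fin N)) : ℝ :=
  ∑ i : Fin N, fderiv ℝ (fun y => fderiv ℝ u y (EuclideanSpace.single i (1:ℝ))) x
    (EuclideanSpace.single i (1:ℝ))

section LiouvilleAux
open Set Filter Topology


-- 1D second derivative test at a local max
lemma sdt {G G' : ℝ → ℝ} {δ : ℝ} (hδ : 0 < δ)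
    (hG : ∀ t ∈ Set.Ioo (-δ) δ, HasDerivAt G (G' t) t)
    (hmax : IsLocalMax G 0) {A : ℝ} (hA : HasDerivAt G' A 0) : A ≤ 0 := by
  by_contra hc
  push_neg at hc
  have h0 : G' 0 = 0 := hmax.hasDerivAt_eq_zero (hG 0 ⟨by linarith, hδ⟩)
  have hslope : Tendsto (slope G' 0) (𝓝[≠] 0) (𝓝 A) :=
    hasDerivAt_iff_tendsto_slope.mp hA
  have hslope' : Tendsto (slope G' 0) (𝓝[>] 0) (𝓝 A) :=
    hslope.mono_left (nhdsWithin_mono _ (fun t ht => ne_of_gt ht))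
  have h1 : ∀ᶠ t in 𝓝[>] (0:ℝ), 0 < slope G' 0 t :=
    hslope'.eventually (eventually_gt_nhds hc)
  have h2 : ∀ᶠ t in 𝓝[>] (0:ℝ), G t ≤ G 0 := hmax.filter_mono nhdsWithin_le_nhds
  have h3 : ∀ᶠ t in 𝓝[>] (0:ℝ), t < δ := by
    have : Set.Ioo (0:ℝ) δ ∈ 𝓝[>] (0:ℝ) := Ioo_mem_nhdsGT_of_mem ⟨le_refl _, hδ⟩
    exact Filter.eventually_of_mem this (fun t ht => ht.2)
  obtain ⟨ε, hε, hIoc⟩ := (mem_nhdsGT_iff_exists_Ioc_subset).mp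
    (h1.and (h2.and h3))
  have hε0 : 0 < ε := hε
  have hεδ : ε < δ := (hIoc ⟨hε0, le_refl _⟩).2.2
  -- G' positive on Ioo 0 ε
  have hpos : ∀ t ∈ Set.Ioo (0:ℝ) ε, 0 < G' t := by
    intro t ht
    have hs := (hIoc ⟨ht.1, le_of_lt ht.2⟩).1
    have : slope G' 0 t = G' t / t := by
      simp [slope_def_field, h0]
    rw [this] at hs
    have := mul_pos hs ht.1
    rwa [div_mul_cancel₀] at this
    exact ne_of_gt ht.1
  have hsub : Set.Icc (0:ℝ) ε ⊆ Set.Ioo (-δ) δ := by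
    intro t ht
    constructor <;> [linarith [ht.1]; linarith [ht.2]]
  have hmono : StrictMonoOn G (Set.Icc (0:ℝ) ε) := by
    apply strictMonoOn_of_deriv_pos (convex_Icc _ _)
    · intro t ht
      exact (hG t (hsub ht)).continuousAt.continuousWithinAt
    · intro t ht
      rw [interior_Icc] at ht
      rw [(hG t (hsub ⟨le_of_lt ht.1, le_of_lt ht.2⟩)).deriv]
      exact hpos t ht
  have : G 0 < G ε := hmono ⟨le_refl _, le_of_lt hε0⟩ ⟨le_of_lt hε0, le_refl _⟩ hε0
  have : G ε ≤ G 0 := (hIoc ⟨hε0, le_refl _⟩).2.1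
  linarith


lemma key_dir {E : Type*} [NormedAddCommGroup E] [NormedSpace ℝ E]
    (f : E → ℝ) (f' : E → E →L[ℝ] ℝ) (s : Set E) (hs : IsOpen s) (y : E) (hy : y ∈ s)
    (hf : ∀ z ∈ s, HasFDerivAt f (f' z) z)
    (w : E) (L : E →L[ℝ] ℝ) (hL : HasFDerivAt (fun z => f' z w) L y)
    (hmax : IsLocalMax f y) : L w ≤ 0 := by
  set γ : ℝ → E := fun t => y + t • w with hγ
  have hγc : Continuous γ := by continuity
  have hγ0 : γ 0 = y := by simp [hγ]
  have hγd : ∀ t : ℝ, HasDerivAt γ w t := by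
    intro t
    convert ((hasDerivAt_id t).smul_const w).const_add y using 1 <;> simp [hγ]
  -- find δ with γ t ∈ s for |t| < δ
  have hopen : IsOpen (γ ⁻¹' s) := hs.preimage hγc
  have h0mem : (0:ℝ) ∈ γ ⁻¹' s := by simp [hγ0, hy]
  obtain ⟨δ, hδ0, hball⟩ := Metric.isOpen_iff.mp hopen 0 h0mem
  have hmem : ∀ t ∈ Set.Ioo (-δ) δ, γ t ∈ s := by
    intro t ht
    apply hball
    simp [Real.dist_eq, abs_lt]
    exact ⟨ht.1, ht.2⟩
  have hG : ∀ t ∈ Set.Ioo (-δ) δ, HasDerivAt (fun t => f (γ t)) (f' (γ t) w) t :=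
    fun t ht => (hf (γ t) (hmem t ht)).comp_hasDerivAt t (hγd t)
  have hG' : HasDerivAt (fun t => f' (γ t) w) (L w) 0 := by
    have hL2 : HasFDerivAt (fun z => f' z w) L (γ 0) := hγ0.symm ▸ hL
    exact hL2.comp_hasDerivAt 0 (hγd 0)
  have hGmax : IsLocalMax (fun t => f (γ t)) 0 := by
    have ht : Filter.Tendsto γ (𝓝 0) (𝓝 y) := by
      rw [← hγ0]; exact hγc.continuousAt
    have := ht.eventually hmax
    simpa [IsLocalMax, IsMaxFilter, hγ0] using this
  exact sdt hδ0 hG hGmax hG'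


variable {N : ℕ}
local notation "E" => EuclideanSpace ℝ (Fin N)
-- NOTE

lemma hasFDerivAt_Q (a z : E) :
    HasFDerivAt (fun x : E => (inner ℝ (x - a) (x - a) : ℝ))
      ((2:ℝ) • (innerSL ℝ (z - a))) z := by
  have h := ((hasFDerivAt_id z).sub_const a).inner ℝ ((hasFDerivAt_id z).sub_const a)
  refine h.congr_fderiv ?_
  ext w
  simp [fderivInnerCLM_apply, real_inner_comm, inner_sub_left, inner_sub_right, mul_comm]
  ring

lemma hasFDerivAt_T (a z : E) (R : ℝ) :
    HasFDerivAt (fun x : E => R^2 - (inner ℝ (x - a) (x - a) : ℝ))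
      (-((2:ℝ) • (innerSL ℝ (z - a)))) z := by
  simpa using (hasFDerivAt_const (R^2) z).fun_sub (hasFDerivAt_Q a z)

noncomputable def DV (a : E) (R K : ℝ) (z : E) : EuclideanSpace ℝ (Fin N) →L[ℝ] ℝ :=
  K • ((-((R^2 - (inner ℝ (z-a) (z-a) : ℝ))^2)⁻¹) • (-((2:ℝ) • (innerSL ℝ (z - a)))))

lemma hasFDerivAt_V (a z : E) (R K : ℝ) (hz : R^2 - (inner ℝ (z-a) (z-a) : ℝ) ≠ 0) :
    HasFDerivAt (fun x : E => K * (R^2 - (inner ℝ (x - a) (x - a) : ℝ))⁻¹)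
      (DV a R K z) z := by
  have hinv := (hasDerivAt_inv hz).comp_hasFDerivAt z (hasFDerivAt_T a z R)
  exact hinv.const_mul K

lemma V_second (a y : E) (R K : ℝ) (i : Fin N)
    (hTy : R^2 - (inner ℝ (y-a) (y-a) : ℝ) ≠ 0) :
    ∃ L : EuclideanSpace ℝ (Fin N) →L[ℝ] ℝ,
      HasFDerivAt (fun z : E => DV a R K z (EuclideanSpace.single i (1:ℝ))) L y ∧
      L (EuclideanSpace.single i (1:ℝ)) =
        2*K*((R^2 - (inner ℝ (y-a) (y-a) : ℝ))^2)⁻¹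
        + 8*K*((R^2 - (inner ℝ (y-a) (y-a) : ℝ))^3)⁻¹
          * (inner ℝ (y-a) (EuclideanSpace.single i (1:ℝ)) : ℝ)^2 := by
  set e : E := EuclideanSpace.single i (1:ℝ) with he
  set T : EuclideanSpace ℝ (Fin N) → ℝ := fun x => R^2 - (inner ℝ (x - a) (x - a) : ℝ) with hT
  have hTsq : HasFDerivAt (fun z : E => (T z)^2)
      (((2:ℕ) * T y ^ 1) • (-((2:ℝ) • (innerSL ℝ (y - a))))) y :=
    (hasDerivAt_pow 2 (T y)).comp_hasFDerivAt y (hasFDerivAt_T a y R)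
  have hinv2 := (hasDerivAt_inv (pow_ne_zero 2 hTy)).comp_hasFDerivAt y hTsq
  have hf1 := hinv2.const_mul (2*K)
  have hf2 := ((hasFDerivAt_id y).sub_const a).inner ℝ (hasFDerivAt_const e y)
  have hprod := hf1.mul hf2
  refine ⟨_, hprod.congr_of_eventuallyEq (Filter.Eventually.of_forall fun z => ?_), ?_⟩
  · simp only [DV, Function.comp, id_eq, ContinuousLinearMap.smul_apply,
      ContinuousLinearMap.neg_apply, innerSL_apply_apply, smul_eq_mul, hT, Pi.mul_apply]
    ring
  · simp only [ContinuousLinearMap.add_apply, ContinuousLinearMap.smul_apply,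
      ContinuousLinearMap.comp_apply, ContinuousLinearMap.prod_apply,
      ContinuousLinearMap.coe_id', id_eq, ContinuousLinearMap.neg_apply,
      fderivInnerCLM_apply, innerSL_apply_apply, smul_eq_mul, ContinuousLinearMap.zero_apply]
    have hee : (inner ℝ e e : ℝ) = 1 := by
      rw [real_inner_self_eq_norm_sq]
      simp [he]
    simp only [Function.comp, hT, hee, inner_zero_right, Nat.cast_ofNat, pow_one, id_eq]
    obtain ⟨p, hp⟩ : ∃ p:ℝ, (inner ℝ (y-a) (y-a):ℝ) = p := ⟨_, rfl⟩
    obtain ⟨q, hq⟩ : ∃ q:ℝ, (inner ℝ (y-a) e:ℝ) = q := ⟨_, rfl⟩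
    rw [hp] at hTy
    rw [hp, hq]
    field_simp
    ring

lemma scalar1 (t : ℝ) (ht : t ≠ 0) : (t^2)⁻¹ = t * (t^3)⁻¹ := by
  field_simp

lemma scalar2 (c K t : ℝ) (ht : t ≠ 0) : c * (K * t⁻¹)^3 = (c*K^2) * (K * (t^3)⁻¹) := by
  field_simp

lemma core {N : ℕ} (c : ℝ) (hc : 0 < c) (ψ : EuclideanSpace ℝ (Fin N) → ℝ) (hψ : ContDiff ℝ 2 ψ)
    (M : ℝ) (hM : ∀ x, ψ x ≤ M)
    (hsub : ∀ x, 0 < ψ x → c * ψ x ^ 3 ≤ lap ψ x)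
    (x0 : EuclideanSpace ℝ (Fin N)) (R : ℝ) (hR : 0 < R) :
    ψ x0 ≤ Real.sqrt ((2*N+8)/c) / R := by
  set B : ℝ := Real.sqrt ((2*N+8)/c) with hB
  have hBpos : 0 < B := Real.sqrt_pos.mpr (div_pos (by positivity) hc)
  have hB2 : B^2 = (2*N+8)/c := Real.sq_sqrt (le_of_lt (div_pos (by positivity) hc))
  by_contra hcon
  push_neg at hcon
  have hψ0 : 0 < ψ x0 := lt_trans (div_pos hBpos hR) hcon
  have hM0 : 0 < M := lt_of_lt_of_le hψ0 (hM x0)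
  set K : ℝ := R * B with hKdef
  have hK : 0 < K := mul_pos hR hBpos
  have hKR : K / R^2 = B / R := by field_simp [ne_of_gt hR]; ring
  set Q : EuclideanSpace ℝ (Fin N) → ℝ := fun z => (inner ℝ (z - x0) (z - x0) : ℝ) with hQdef
  set T : EuclideanSpace ℝ (Fin N) → ℝ := fun z => R^2 - Q z with hTdef
  set V : EuclideanSpace ℝ (Fin N) → ℝ := fun z => K * (T z)⁻¹ with hVdef
  have hcase : K / M < R^2 := by
    by_contra hcase
    push_neg at hcase
    have h' : R^2 * M ≤ K := (le_div_iff₀ hM0).mp hcase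
    have : M ≤ K / R^2 := (le_div_iff₀ (pow_pos hR 2)).mpr (by linarith)
    rw [hKR] at this
    linarith [hM x0]
  have hKM : 0 < K / M := div_pos hK hM0
  set ρ : ℝ := Real.sqrt (R^2 - K/M) with hρdef
  have hρ0 : 0 ≤ ρ := Real.sqrt_nonneg _
  have hρsq : ρ^2 = R^2 - K/M := Real.sq_sqrt (by linarith)
  have hρR : ρ < R := by
    apply lt_of_pow_lt_pow_left₀ 2 (le_of_lt hR)
    rw [hρsq]; linarith
  set S : Set (EuclideanSpace ℝ (Fin N)) := Metric.closedBall x0 ρ with hSdef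
  have hQnorm : ∀ z, Q z = ‖z - x0‖^2 := fun z => real_inner_self_eq_norm_sq _
  have hTS : ∀ z ∈ S, K/M ≤ T z := by
    intro z hz
    have h1 : ‖z - x0‖ ≤ ρ := by
      rw [← dist_eq_norm]; exact Metric.mem_closedBall.mp hz
    have h2 : Q z ≤ ρ^2 := by
      rw [hQnorm z]; exact pow_le_pow_left₀ (norm_nonneg _) h1 2
    simp only [hTdef]
    rw [hρsq] at h2
    linarith
  have hTpos : ∀ z ∈ S, 0 < T z := fun z hz => lt_of_lt_of_le hKM (hTS z hz)
  have hQc : Continuous Q :=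
    Continuous.inner (continuous_id.sub continuous_const) (continuous_id.sub continuous_const)
  have hTc : Continuous T := continuous_const.sub hQc
  have hcontS : ContinuousOn (fun z => ψ z - V z) S := by
    apply (hψ.continuous.continuousOn).sub
    exact continuousOn_const.mul (hTc.continuousOn.inv₀ fun z hz => ne_of_gt (hTpos z hz))
  obtain ⟨y, hyS, hymax⟩ := (isCompact_closedBall x0 ρ).exists_isMaxOn
    ⟨x0, Metric.mem_closedBall_self hρ0⟩ hcontS
  have hT0 : T x0 = R^2 := by simp [hTdef, hQdef]
  have hVx0 : V x0 = B / R := by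
    rw [hVdef]; simp only; rw [hT0, ← hKR]; rw [div_eq_mul_inv]
  have hhx0 : 0 < ψ x0 - V x0 := by rw [hVx0]; linarith
  have hhy : 0 < ψ y - V y :=
    lt_of_lt_of_le hhx0 (hymax (Metric.mem_closedBall_self hρ0))
  have hyint : dist y x0 < ρ := by
    rcases lt_or_eq_of_le (Metric.mem_closedBall.mp hyS) with h | h
    · exact h
    · exfalso
      have hQy : Q y = ρ^2 := by rw [hQnorm y, ← dist_eq_norm, h]
      have hTyv : T y = K/M := by simp only [hTdef]; rw [hQy, hρsq]; ring
      have hVyv : V y = M := by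
        rw [hVdef]; simp only; rw [hTyv]
        field_simp
      have := hM y
      rw [hVyv] at hhy
      linarith
  have hTy : 0 < T y := hTpos y hyS
  have hVy : 0 < V y := mul_pos hK (inv_pos.mpr hTy)
  have hψyV : V y < ψ y := by linarith
  have hψypos : 0 < ψ y := lt_trans hVy hψyV
  have hlm : IsLocalMax (fun z => ψ z - V z) y :=
    hymax.isLocalMax (Metric.closedBall_mem_nhds_of_mem hyint)
  -- the open set
  set s : Set (EuclideanSpace ℝ (Fin N)) := {z | Q z < R^2} with hsdef
  have hso : IsOpen s := isOpen_lt hQc continuous_const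
  have hys : y ∈ s := by simp only [hsdef, Set.mem_setOf_eq]; simp only [hTdef] at hTy; linarith
  have hdiffψ : Differentiable ℝ ψ := hψ.differentiable (by norm_num)
  have hf : ∀ z ∈ s, HasFDerivAt (fun x => ψ x - V x) (fderiv ℝ ψ z - DV x0 R K z) z := by
    intro z hz
    have hTz : R^2 - (inner ℝ (z - x0) (z - x0) : ℝ) ≠ 0 := by
      have : Q z < R^2 := hz
      simp only [hQdef] at this
      intro h; rw [sub_eq_zero] at h; rw [h] at this; exact lt_irrefl _ this
    exact ((hdiffψ z).hasFDerivAt).sub (hasFDerivAt_V x0 z R K hTz)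
  have hψ1 : ContDiff ℝ 1 (fderiv ℝ ψ) := hψ.fderiv_right (by norm_num)
  -- key per-coordinate bound
  have hkey : ∀ i : Fin N,
      fderiv ℝ (fun z => fderiv ℝ ψ z (EuclideanSpace.single i (1:ℝ))) y
        (EuclideanSpace.single i (1:ℝ)) ≤
      2*K*((T y)^2)⁻¹ + 8*K*((T y)^3)⁻¹
        * (inner ℝ (y-x0) (EuclideanSpace.single i (1:ℝ)) : ℝ)^2 := by
    intro i
    set e : EuclideanSpace ℝ (Fin N) := EuclideanSpace.single i (1:ℝ) with he
    have hψi : DifferentiableAt ℝ (fun z => fderiv ℝ ψ z e) y := by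
      have : ContDiff ℝ 1 (fun z => fderiv ℝ ψ z e) :=
        (ContinuousLinearMap.apply ℝ ℝ e).contDiff.comp hψ1
      exact (this.differentiable one_ne_zero) y
    obtain ⟨LVi, hLVi, hLVival⟩ := V_second x0 y R K i
      (by simp only [hTdef, hQdef] at hTy ⊢; exact ne_of_gt hTy)
    have hL : HasFDerivAt (fun z => (fderiv ℝ ψ z - DV x0 R K z) e)
        (fderiv ℝ (fun z => fderiv ℝ ψ z e) y - LVi) y := by
      refine (hψi.hasFDerivAt.sub hLVi).congr_of_eventuallyEq
        (Filter.Eventually.of_forall fun z => ?_)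
      simp [ContinuousLinearMap.sub_apply, he]
    have h0 := key_dir (fun x => ψ x - V x) (fun z => fderiv ℝ ψ z - DV x0 R K z)
      s hso y hys hf e _ hL hlm
    rw [ContinuousLinearMap.sub_apply] at h0
    have := hLVival
    simp only [hTdef, hQdef] at this ⊢
    rw [this] at h0
    linarith
  -- sum the bounds
  have hQy0 : 0 ≤ Q y := real_inner_self_nonneg
  have hQyR : Q y ≤ R^2 := by simp only [hTdef] at hTy; linarith
  have hTyR : T y ≤ R^2 := by simp only [hTdef]; linarith
  have hlapbound : lap ψ y ≤ 2*N*K*((T y)^2)⁻¹ + 8*K*((T y)^3)⁻¹ * Q y := by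
    have h1 : lap ψ y ≤ ∑ i : Fin N, (2*K*((T y)^2)⁻¹ + 8*K*((T y)^3)⁻¹
        * (inner ℝ (y-x0) (EuclideanSpace.single i (1:ℝ)) : ℝ)^2) :=
      Finset.sum_le_sum (fun i _ => hkey i)
    have h2 : ∑ i : Fin N, (2*K*((T y)^2)⁻¹ + 8*K*((T y)^3)⁻¹
        * (inner ℝ (y-x0) (EuclideanSpace.single i (1:ℝ)) : ℝ)^2)
        = 2*N*K*((T y)^2)⁻¹ + 8*K*((T y)^3)⁻¹ * Q y := by
      rw [Finset.sum_add_distrib, Finset.sum_const, Finset.card_univ, Fintype.card_fin]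
      have h3 : ∀ i : Fin N, (inner ℝ (y-x0) (EuclideanSpace.single i (1:ℝ)) : ℝ) = (y - x0) i := by
        intro i; rw [EuclideanSpace.inner_single_right]; simp
      have h4 : ∑ i : Fin N, (8*K*((T y)^3)⁻¹
          * (inner ℝ (y-x0) (EuclideanSpace.single i (1:ℝ)) : ℝ)^2)
          = 8*K*((T y)^3)⁻¹ * Q y := by
        rw [← Finset.mul_sum]
        congr 1
        simp_rw [h3]
        simp only [hQdef, PiLp.inner_apply, RCLike.inner_apply, conj_trivial]
        exact Finset.sum_congr rfl (fun i _ => (sq ((y - x0) i)).symm) |>.symm ▸ rfl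
      rw [h4, nsmul_eq_mul]
      push_cast
      ring
    linarith
  -- conclude
  have hsuby := hsub y hψypos
  have ht3 : (0:ℝ) < ((T y)^3)⁻¹ := inv_pos.mpr (pow_pos hTy 3)
  have hbd2 : 2*N*K*((T y)^2)⁻¹ + 8*K*((T y)^3)⁻¹ * Q y ≤ (2*N+8)*K*R^2*((T y)^3)⁻¹ := by
    rw [scalar1 (T y) (ne_of_gt hTy)]
    nlinarith [mul_pos hK ht3, mul_nonneg (mul_nonneg (by positivity : (0:ℝ) ≤ 2*(N:ℝ)) (le_of_lt hK)) (le_of_lt ht3)]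
  have hcK2 : c * K^2 = (2*N+8) * R^2 := by
    rw [hKdef, mul_pow, hB2]
    field_simp
  have hbd3 : (2*N+8)*K*R^2*((T y)^3)⁻¹ = c * (V y)^3 := by
    have h5 : c * (V y)^3 = (c*K^2) * (K * ((T y)^3)⁻¹) := by
      rw [hVdef]
      exact scalar2 c K (T y) (ne_of_gt hTy)
    rw [h5, hcK2]
    ring
  have hfinal : c * (V y)^3 < c * (ψ y)^3 :=
    mul_lt_mul_of_pos_left (pow_lt_pow_left₀ hψyV (le_of_lt hVy) (by norm_num)) hc
  linarith


lemma liouville_aux {N : ℕ} (c : ℝ) (hc : 0 < c) (ψ : EuclideanSpace ℝ (Fin N) → ℝ)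
    (hψ : ContDiff ℝ 2 ψ) (M : ℝ) (hM : ∀ x, ψ x ≤ M)
    (hsub : ∀ x, 0 < ψ x → c * ψ x ^ 3 ≤ lap ψ x) :
    ∀ x, ψ x ≤ 0 := by
  intro x0
  by_contra hx
  push_neg at hx
  set B : ℝ := Real.sqrt ((2*N+8)/c) with hB
  have hBpos : 0 < B := Real.sqrt_pos.mpr (div_pos (by positivity) hc)
  have h := core c hc ψ hψ M hM hsub x0 (2 * B / ψ x0) (by positivity)
  rw [← hB] at h
  have heq : B / (2 * B / ψ x0) = ψ x0 / 2 := by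
    rw [div_div_eq_mul_div]
    rw [div_eq_div_iff (by positivity) (by norm_num)]
    ring
  rw [heq] at h
  linarith

-- lap is linear on C² functions
lemma lap_sub {N : ℕ} (u v : EuclideanSpace ℝ (Fin N) → ℝ)
    (hu : ContDiff ℝ 2 u) (hv : ContDiff ℝ 2 v) (x : EuclideanSpace ℝ (Fin N)) :
    lap (fun z => u z - v z) x = lap u x - lap v x := by
  unfold lap
  rw [← Finset.sum_sub_distrib]
  apply Finset.sum_congr rfl
  intro i _
  set e : EuclideanSpace ℝ (Fin N) := EuclideanSpace.single i (1:ℝ) with he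
  have hdu : Differentiable ℝ u := hu.differentiable (by norm_num)
  have hdv : Differentiable ℝ v := hv.differentiable (by norm_num)
  have h1 : (fun z => fderiv ℝ (fun w => u w - v w) z e)
      = fun z => fderiv ℝ u z e - fderiv ℝ v z e := by
    funext z
    rw [fderiv_fun_sub (hdu z) (hdv z)]
    simp
  rw [h1]
  have hdu2 : DifferentiableAt ℝ (fun z => fderiv ℝ u z e) x :=
    (((ContinuousLinearMap.apply ℝ ℝ e).contDiff.comp
      (hu.fderiv_right (m := 1) (by norm_num))).differentiable one_ne_zero) x
  have hdv2 : DifferentiableAt ℝ (fun z => fderiv ℝ v z e) x :=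
    (((ContinuousLinearMap.apply ℝ ℝ e).contDiff.comp
      (hv.fderiv_right (m := 1) (by norm_num))).differentiable one_ne_zero) x
  rw [fderiv_fun_sub hdu2 hdv2]
  simp


end LiouvilleAux


theorem liouville_cubic_BE (N : ℕ) (hN : 1 ≤ N) (lam : ℝ) (hlam : 1 < lam)
    (u v : EuclideanSpace ℝ (Fin N) → ℝ)
    (hu : ContDiff ℝ 2 u) (hv : ContDiff ℝ 2 v)
    (hupos : ∀ x, 0 ≤ u x) (hvpos : ∀ x, 0 ≤ v x)
    (hub : ∃ M, ∀ x, |u x| ≤ M) (hvb : ∃ M, ∀ x, |v x| ≤ M)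
    (hequ : ∀ x, -lap u x = u x * (v x) ^ 2 - lam * (u x) ^ 3)
    (heqv : ∀ x, -lap v x = v x * (u x) ^ 2 - lam * (v x) ^ 3) :
    u = 0 ∧ v = 0 := by
  obtain ⟨Mu, hMu⟩ := hub
  obtain ⟨Mv, hMv⟩ := hvb
  have hlapu : ∀ x, lap u x = lam * (u x)^3 - u x * (v x)^2 := fun x => by
    have := hequ x; linarith
  have hlapv : ∀ x, lap v x = lam * (v x)^3 - v x * (u x)^2 := fun x => by
    have := heqv x; linarith
  -- symmetry: u = v
  have key : ∀ (a b : EuclideanSpace ℝ (Fin N) → ℝ),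
      ContDiff ℝ 2 a → ContDiff ℝ 2 b → (∀ x, 0 ≤ a x) → (∀ x, 0 ≤ b x) →
      (∀ x, |a x| ≤ Mu ∨ |a x| ≤ Mv) →
      (∀ x, lap a x = lam * (a x)^3 - a x * (b x)^2) →
      (∀ x, lap b x = lam * (b x)^3 - b x * (a x)^2) →
      ∀ x, a x - b x ≤ 0 := by
    intro a b ha hb ha0 hb0 hab hla hlb
    apply liouville_aux 1 one_pos (fun x => a x - b x) (ha.sub hb) (max Mu Mv)
    · intro x
      rcases hab x with h | h
      · calc a x - b x ≤ a x := by linarith [hb0 x]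
          _ ≤ |a x| := le_abs_self _
          _ ≤ Mu := h
          _ ≤ max Mu Mv := le_max_left _ _
      · calc a x - b x ≤ a x := by linarith [hb0 x]
          _ ≤ |a x| := le_abs_self _
          _ ≤ Mv := h
          _ ≤ max Mu Mv := le_max_right _ _
    · intro x hx
      rw [lap_sub a b ha hb x, hla x, hlb x]
      have h1 := ha0 x
      have h2 := hb0 x
      have hbr : 0 ≤ (lam-1)*(a x^2 + b x^2) + (lam+3)*(a x*b x) := by
        nlinarith [sq_nonneg (a x), sq_nonneg (b x), mul_nonneg h1 h2]
      have hfac : 0 ≤ (a x - b x) * ((lam-1)*(a x^2+b x^2) + (lam+3)*(a x*b x)) :=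
        mul_nonneg (le_of_lt hx) hbr
      nlinarith [hfac]
  have huv : ∀ x, u x - v x ≤ 0 := key u v hu hv hupos hvpos (fun x => Or.inl (hMu x)) hlapu hlapv
  have hvu : ∀ x, v x - u x ≤ 0 := key v u hv hu hvpos hupos (fun x => Or.inr (hMv x)) hlapv hlapu
  have huveq : ∀ x, u x = v x := fun x => le_antisymm (by linarith [huv x]) (by linarith [hvu x])
  -- now u satisfies lap u = (lam - 1) u^3
  have hu0 : ∀ x, u x ≤ 0 := by
    apply liouville_aux (lam - 1) (by linarith) u hu Mu
      (fun x => le_trans (le_abs_self _) (hMu x))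
    intro x hx
    rw [hlapu x, ← huveq x]
    have hrw : lam * u x^3 - u x * u x^2 = (lam-1) * u x^3 := by ring
    rw [hrw]
  have huz : u = 0 := funext fun x => le_antisymm (hu0 x) (hupos x)
  refine ⟨huz, ?_⟩
  funext x
  rw [← huveq x, huz]
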